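/- For every s ∈ ℂ with -1 < Re s < 0, ∫_0^∞ sin(x) x^{-s-1} dx = -sin(πs/2) Γ(-s). -/

import Mathlib

open Complex Filter

open Set MeasureTheory Real intervalIntegral

set_option maxHeartbeats 1000000

lemma aux_hasDerivAt (t x : ℝ) :
    HasDerivAt (fun x : ℝ => -(Real.exp (-(t*x)) * (Real.cos x + t * Real.sin x)) / (1+t^2))
      (Real.exp (-(t*x)) * Real.sin x) x := by
  have h1 : HasDerivAt (fun x : ℝ => Real.exp (-(t*x))) (-t * Real.exp (-(t*x))) x := by
    simpa [mul_comm, Function.comp_def] using (Real.hasDerivAt_exp (-(t*x))).comp x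
      (((hasDerivAt_id x).const_mul t).neg)
  have h2 : HasDerivAt (fun x : ℝ => Real.cos x + t * Real.sin x)
      (-Real.sin x + t * Real.cos x) x :=
    (Real.hasDerivAt_cos x).add ((Real.hasDerivAt_sin x).const_mul t)
  have h3 := ((h1.mul h2).neg.div_const (1+t^2))
  refine h3.congr_deriv ?_
  have ht : (1 : ℝ) + t^2 ≠ 0 := by positivity
  field_simp
  ring

lemma integral_sin_exp (t T : ℝ) :
    ∫ x in (0:ℝ)..T, Real.exp (-(t*x)) * Real.sin x
      = (1 - Real.exp (-(t*T)) * (Real.cos T + t * Real.sin T))/(1+t^2) := by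
  have ht : (1 : ℝ) + t^2 ≠ 0 := by positivity
  have := intervalIntegral.integral_eq_sub_of_hasDerivAt
    (f := fun x : ℝ => -(Real.exp (-(t*x)) * (Real.cos x + t * Real.sin x)) / (1+t^2))
    (fun x _ => aux_hasDerivAt t x) (a := 0) (b := T) ?_
  · rw [this]
    simp
    ring
  · apply Continuous.intervalIntegrable
    continuity

lemma integrable_bound {α : ℝ} (h0 : 0 < α) (h1 : α < 1) :
    IntegrableOn (fun t : ℝ => t^(-α) * ((2+t)/(1+t^2))) (Ioi 0) := by
  have : Ioi (0:ℝ) = Ioc 0 1 ∪ Ioi 1 := by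
    rw [Ioc_union_Ioi_eq_Ioi]; norm_num
  rw [this, integrableOn_union]
  constructor
  · have hi : IntegrableOn (fun t : ℝ => t ^ (-α) * 3) (Ioc 0 1) := by
      apply Integrable.mul_const
      exact (intervalIntegrable_iff_integrableOn_Ioc_of_le (by norm_num)).mp
        (intervalIntegral.intervalIntegrable_rpow' (by linarith))
    apply hi.mono' ?_ ?_
    · apply (ContinuousOn.aestronglyMeasurable ?_ measurableSet_Ioc)
      apply ContinuousOn.mul
      · exact fun x hx => (Real.continuousAt_rpow_const x _ (Or.inl (ne_of_gt hx.1))).continuousWithinAt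
      · apply ContinuousOn.div (by fun_prop) (by fun_prop)
        intro x _; positivity
    · filter_upwards [ae_restrict_mem measurableSet_Ioc] with t ht
      have h2 : (0:ℝ) < 1 + t^2 := by positivity
      rw [Real.norm_eq_abs, _root_.abs_of_nonneg
        (mul_nonneg (Real.rpow_nonneg ht.1.le _) (div_nonneg (by linarith [ht.1.le]) (by positivity)))]
      apply mul_le_mul_of_nonneg_left ?_ (Real.rpow_nonneg ht.1.le _)
      rw [div_le_iff₀ h2]
      nlinarith [ht.1.le, ht.2, sq_nonneg t]
  · have hi : IntegrableOn (fun t : ℝ => 3 * t ^ (-α - 1)) (Ioi 1) :=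
      (integrableOn_Ioi_rpow_of_lt (by linarith) one_pos).const_mul 3
    apply hi.mono' ?_ ?_
    · apply (ContinuousOn.aestronglyMeasurable ?_ measurableSet_Ioi)
      apply ContinuousOn.mul
      · exact fun x hx => (Real.continuousAt_rpow_const x _
          (Or.inl (by have : (1:ℝ) < x := hx; positivity))).continuousWithinAt
      · apply ContinuousOn.div (by fun_prop) (by fun_prop)
        intro x hx; have h1x : (1:ℝ) < x := hx; positivity
    · filter_upwards [ae_restrict_mem measurableSet_Ioi] with t ht
      have ht1 : (1:ℝ) < t := ht
      have h2 : (0:ℝ) < 1 + t^2 := by positivity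
      rw [Real.norm_eq_abs, _root_.abs_of_nonneg (by positivity)]
      have e1 : t ^ (-α - 1) = t ^ (-α) * t⁻¹ := by
        rw [Real.rpow_sub (by linarith), Real.rpow_one, div_eq_mul_inv]
      rw [e1, mul_comm (3:ℝ), mul_assoc]
      apply mul_le_mul_of_nonneg_left ?_ (Real.rpow_nonneg (by linarith) _)
      rw [div_le_iff₀ h2]
      have e2 : t⁻¹ * 3 * (1 + t ^ 2) = 3 * (t⁻¹ + t) := by field_simp
      rw [e2]
      nlinarith [inv_pos.mpr (by linarith : (0:ℝ) < t), inv_le_one_of_one_le₀ ht1.le]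

lemma integrable_bound2 {α : ℝ} (h0 : 0 < α) (h1 : α < 1) :
    IntegrableOn (fun t : ℝ => t^(-α) / (1+t^2)) (Ioi 0) := by
  apply (integrable_bound h0 h1).mono' ?_ ?_
  · apply (ContinuousOn.aestronglyMeasurable ?_ measurableSet_Ioi)
    apply ContinuousOn.div
    · exact fun x hx => (Real.continuousAt_rpow_const x _ (Or.inl (ne_of_gt hx))).continuousWithinAt
    · fun_prop
    · intro x _; positivity
  · filter_upwards [ae_restrict_mem measurableSet_Ioi] with t ht
    have ht0 : (0:ℝ) < t := ht
    have h2 : (0:ℝ) < 1 + t^2 := by positivity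
    rw [Real.norm_eq_abs, _root_.abs_of_nonneg (by positivity), div_eq_mul_one_div]
    apply mul_le_mul_of_nonneg_left ?_ (Real.rpow_nonneg ht0.le _)
    gcongr
    linarith

lemma integrable_cpow_exp {b : ℂ} {r : ℝ} (hb : 0 < b.re) (hr : 0 < r) :
    IntegrableOn (fun t : ℝ => (t:ℂ) ^ (b-1) * Complex.exp (-(r*t))) (Ioi 0) := by
  have h := Complex.GammaIntegral_convergent hb
  -- h : IntegrableOn (fun x => Real.exp (-x) * x^(b-1)) (Ioi 0)
  have h2 : IntegrableOn (fun x : ℝ => ↑(Real.exp (-(r*x))) * (↑(r*x) : ℂ)^(b-1)) (Ioi 0) := by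
    have := (integrable_indicator_iff (measurableSet_Ioi (a := (0:ℝ)))).mpr h
    have h3 := this.comp_mul_left' (R := r) hr.ne'
    rw [← integrable_indicator_iff (measurableSet_Ioi (a := (0:ℝ)))]
    apply h3.congr
    filter_upwards with x
    by_cases hx : x ∈ Ioi (0:ℝ)
    · have hrx : r * x ∈ Ioi (0:ℝ) := by exact mul_pos hr hx
      simp [indicator_of_mem hx, indicator_of_mem hrx]
    · have hrx : r * x ∉ Ioi (0:ℝ) := by
        simp only [mem_Ioi, not_lt] at hx ⊢
        exact mul_nonpos_of_nonneg_of_nonpos hr.le hx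
      simp [indicator_of_notMem hx, indicator_of_notMem hrx]
  apply IntegrableOn.congr_fun (h2.const_mul ((r:ℂ)^(1-b))) ?_ measurableSet_Ioi
  intro x hx
  have hx0 : (0:ℝ) < x := hx
  simp only
  rw [Complex.ofReal_mul, mul_cpow_ofReal_nonneg hr.le hx0.le]
  rw [Complex.ofReal_exp]
  push_cast
  rw [show ((r:ℂ))^((1:ℂ)-b) * (Complex.exp (-(r*x)) * ((r:ℂ)^(b-1) * (x:ℂ)^(b-1)))
      = ((r:ℂ)^((1:ℂ)-b) * (r:ℂ)^(b-1)) * ((x:ℂ)^(b-1) * Complex.exp (-(r*x))) by ring]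
  rw [← Complex.cpow_add _ _ (by exact_mod_cast hr.ne')]
  norm_num

section
variable {a : ℂ}

lemma mellin_exp {a : ℂ} (ha1 : a.re < 1) {x : ℝ} (hx : 0 < x) :
    ∫ t in Ioi (0:ℝ), (t:ℂ)^(-a) * Complex.exp (-(x*t))
      = Complex.Gamma (1-a) * (x:ℂ)^(a-1) := by
  have h := Complex.integral_cpow_mul_exp_neg_mul_Ioi (a := 1-a) (r := x)
    (by simp [Complex.sub_re]; linarith) hx
  have e : (1:ℂ) - a - 1 = -a := by ring
  rw [e] at h
  rw [h, mul_comm]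
  congr 1
  have hxne : (x:ℂ) ≠ 0 := by exact_mod_cast hx.ne'
  have harg : (x:ℂ).arg ≠ Real.pi := by
    rw [Complex.arg_ofReal_of_nonneg hx.le]
    exact (Real.pi_ne_zero).symm
  rw [one_div, Complex.inv_cpow _ _ harg, ← Complex.cpow_neg]
  congr 1
  ring

lemma integrable_cpow_exp' (ha1 : a.re < 1) {x : ℝ} (hx : 0 < x) :
    IntegrableOn (fun t : ℝ => (t:ℂ)^(-a) * Complex.exp (-(x*t))) (Ioi 0) := by
  have := integrable_cpow_exp (b := 1-a) (by simp [Complex.sub_re]; linarith) hx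
  simpa [show (1:ℂ)-a-1 = -a by ring] using this

lemma prod_meas (a : ℂ) {T : ℝ} :
    AEStronglyMeasurable
      (fun p : ℝ × ℝ => (Real.sin p.1 : ℂ) * ((p.2:ℂ)^(-a) * Complex.exp (-(p.1*p.2))))
      ((volume.restrict (Ioc 0 T)).prod (volume.restrict (Ioi 0))) := by
  have hc : ContinuousOn
      (fun p : ℝ × ℝ => (Real.sin p.1 : ℂ) * ((p.2:ℂ)^(-a) * Complex.exp (-(p.1*p.2))))
      ((univ : Set ℝ) ×ˢ Ioi 0) := by
    apply ContinuousOn.mul (by fun_prop)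
    apply ContinuousOn.mul ?_ (by fun_prop)
    intro p hp
    apply ContinuousAt.continuousWithinAt
    apply ContinuousAt.cpow (by fun_prop) continuousAt_const
    left
    simpa using hp.2
  have h1 : AEStronglyMeasurable
      (fun p : ℝ × ℝ => (Real.sin p.1 : ℂ) * ((p.2:ℂ)^(-a) * Complex.exp (-(p.1*p.2))))
      ((volume.prod volume).restrict ((univ : Set ℝ) ×ˢ Ioi 0)) :=
    hc.aestronglyMeasurable (MeasurableSet.univ.prod measurableSet_Ioi)
  rw [Measure.prod_restrict]
  exact h1.mono_measure (Measure.restrict_mono (prod_mono (subset_univ _) subset_rfl) le_rfl)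

lemma prod_int (ha0 : 0 < a.re) (ha1 : a.re < 1) {T : ℝ} (hT : 0 < T) :
    Integrable
      (fun p : ℝ × ℝ => (Real.sin p.1 : ℂ) * ((p.2:ℂ)^(-a) * Complex.exp (-(p.1*p.2))))
      ((volume.restrict (Ioc 0 T)).prod (volume.restrict (Ioi 0))) := by
  rw [integrable_prod_iff (prod_meas a)]
  constructor
  · filter_upwards [ae_restrict_mem measurableSet_Ioc] with x hx
    exact (integrable_cpow_exp' ha1 hx.1).const_mul _
  · have key : ∀ x ∈ Ioc (0:ℝ) T,
        (∫ t in Ioi (0:ℝ), ‖(Real.sin x : ℂ) * ((t:ℂ)^(-a) * Complex.exp (-(x*t)))‖)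
          = |Real.sin x| * ((1/x)^(1-a.re) * Real.Gamma (1-a.re)) := by
      intro x hx
      rw [← integral_rpow_mul_exp_neg_mul_Ioi (by linarith : (0:ℝ) < 1 - a.re) hx.1,
        ← MeasureTheory.integral_const_mul]
      apply setIntegral_congr_fun measurableSet_Ioi
      intro t ht
      simp only [norm_mul, Complex.norm_real, Real.norm_eq_abs,
        Complex.norm_cpow_eq_rpow_re_of_pos ht, Complex.norm_exp]
      have e : (-(↑x * ↑t) : ℂ).re = -(x*t) := by simp
      rw [e, show (1:ℝ) - a.re - 1 = (-a).re by simp]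
    apply Integrable.mono' (g := fun x => Real.Gamma (1-a.re) * x^(a.re - 1))
    · exact ((intervalIntegrable_iff_integrableOn_Ioc_of_le hT.le).mp
        (intervalIntegral.intervalIntegrable_rpow' (by linarith))).const_mul _
    · exact (prod_meas a).norm.integral_prod_right'
    · filter_upwards [ae_restrict_mem measurableSet_Ioc] with x hx
      have h1 : (0:ℝ) ≤ ∫ t in Ioi (0:ℝ),
          ‖(Real.sin x : ℂ) * ((t:ℂ)^(-a) * Complex.exp (-(x*t)))‖ :=
        integral_nonneg fun t => norm_nonneg _
      rw [Real.norm_eq_abs, _root_.abs_of_nonneg h1, key x hx]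
      have e1 : (1/x)^(1-a.re) = x^(a.re-1) := by
        rw [one_div, Real.inv_rpow hx.1.le, ← Real.rpow_neg hx.1.le]
        ring_nf
      rw [e1]
      have hG : 0 < Real.Gamma (1-a.re) := Real.Gamma_pos_of_pos (by linarith)
      calc |Real.sin x| * (x^(a.re-1) * Real.Gamma (1-a.re))
          ≤ 1 * (x^(a.re-1) * Real.Gamma (1-a.re)) := by
            apply mul_le_mul_of_nonneg_right ?_
              (mul_nonneg (Real.rpow_nonneg hx.1.le _) hG.le)
            exact abs_le.mpr ⟨Real.neg_one_le_sin x, Real.sin_le_one x⟩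
        _ = Real.Gamma (1-a.re) * x^(a.re-1) := by ring

lemma fubini1 (ha0 : 0 < a.re) (ha1 : a.re < 1) {T : ℝ} (hT : 0 < T) :
    Complex.Gamma (1-a) * ∫ x in (0:ℝ)..T, (Real.sin x : ℂ) * (x:ℂ)^(a-1)
      = ∫ t in Ioi (0:ℝ), (t:ℂ)^(-a) *
          (((1 - Real.exp (-(t*T)) * (Real.cos T + t*Real.sin T))/(1+t^2) : ℝ) : ℂ) := by
  rw [intervalIntegral.integral_of_le hT.le, ← MeasureTheory.integral_const_mul]
  have step1 : (∫ x in Ioc (0:ℝ) T, Complex.Gamma (1-a) * ((Real.sin x : ℂ) * (x:ℂ)^(a-1)))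
      = ∫ x in Ioc (0:ℝ) T, ∫ t in Ioi (0:ℝ),
          (Real.sin x : ℂ) * ((t:ℂ)^(-a) * Complex.exp (-(x*t))) := by
    apply setIntegral_congr_fun measurableSet_Ioc
    intro x hx
    dsimp only
    rw [MeasureTheory.integral_const_mul, mellin_exp ha1 hx.1]
    ring
  rw [step1]
  rw [integral_integral_swap (prod_int ha0 ha1 hT)]
  apply setIntegral_congr_fun measurableSet_Ioi
  intro t ht
  have e1 : ∀ x : ℝ, (Real.sin x : ℂ) * ((t:ℂ)^(-a) * Complex.exp (-(x*t)))
      = (t:ℂ)^(-a) * ((Real.exp (-(t*x)) * Real.sin x : ℝ) : ℂ) := by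
    intro x
    rw [Complex.ofReal_mul, Complex.ofReal_exp]
    push_cast
    ring_nf
  simp_rw [e1]
  rw [MeasureTheory.integral_const_mul]
  congr 1
  calc (∫ x in Ioc (0:ℝ) T, ((Real.exp (-(t*x)) * Real.sin x : ℝ) : ℂ))
      = ((∫ x in Ioc (0:ℝ) T, Real.exp (-(t*x)) * Real.sin x : ℝ) : ℂ) := _root_.integral_ofReal
    _ = _ := by
        rw [← intervalIntegral.integral_of_le hT.le, integral_sin_exp]

lemma cont_cpow : ContinuousOn (fun t : ℝ => (t:ℂ)^(-a)) (Ioi 0) := by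
  intro t ht
  apply ContinuousAt.continuousWithinAt
  apply ContinuousAt.cpow (by fun_prop) continuousAt_const
  left; simpa using ht

lemma tendsto_int (ha0 : 0 < a.re) (ha1 : a.re < 1) :
    Tendsto (fun T : ℝ => ∫ t in Ioi (0:ℝ), (t:ℂ)^(-a) *
        (((1 - Real.exp (-(t*T)) * (Real.cos T + t*Real.sin T))/(1+t^2) : ℝ) : ℂ)) atTop
      (nhds (∫ t in Ioi (0:ℝ), (t:ℂ)^(-a) * ((1/(1+t^2) : ℝ) : ℂ))) := by
  apply MeasureTheory.tendsto_integral_filter_of_dominated_convergence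
    (bound := fun t => t^(-a.re) * ((2+t)/(1+t^2)))
  · filter_upwards with T
    apply (cont_cpow.mul ?_).aestronglyMeasurable measurableSet_Ioi
    have hcont : Continuous (fun x : ℝ =>
        (1 - Real.exp (-(x*T)) * (Real.cos T + x*Real.sin T))/(1+x^2)) := by
      apply Continuous.div (by fun_prop) (by fun_prop)
      intro x; positivity
    exact (Complex.continuous_ofReal.comp hcont).continuousOn
  · filter_upwards [eventually_ge_atTop (0:ℝ)] with T hT
    filter_upwards [ae_restrict_mem measurableSet_Ioi] with t ht
    have ht0 : (0:ℝ) < t := ht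
    have h2 : (0:ℝ) < 1 + t^2 := by positivity
    rw [norm_mul, Complex.norm_cpow_eq_rpow_re_of_pos ht0,
      Complex.norm_real, Real.norm_eq_abs]
    rw [show (-a).re = -a.re by simp]
    apply mul_le_mul_of_nonneg_left ?_ (Real.rpow_nonneg ht0.le _)
    rw [abs_div, _root_.abs_of_pos h2, div_le_div_iff_of_pos_right h2]
    have he : Real.exp (-(t*T)) ≤ 1 := Real.exp_le_one_iff.mpr (by nlinarith)
    calc |1 - Real.exp (-(t*T)) * (Real.cos T + t*Real.sin T)|
        ≤ 1 + Real.exp (-(t*T)) * |Real.cos T + t*Real.sin T| := by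
          rw [sub_eq_add_neg]
          refine (abs_add_le _ _).trans ?_
          simp [abs_mul, Real.exp_pos, _root_.abs_of_pos (Real.exp_pos _)]
      _ ≤ 2 + t := by
          have h5 : |Real.cos T + t*Real.sin T| ≤ 1 + t := by
            calc |Real.cos T + t*Real.sin T| ≤ |Real.cos T| + |t*Real.sin T| := abs_add_le _ _
              _ ≤ 1 + t := by
                  rw [abs_mul, _root_.abs_of_nonneg ht0.le]
                  have := Real.abs_cos_le_one T
                  have h4 := Real.abs_sin_le_one T
                  nlinarith
          nlinarith [abs_nonneg (Real.cos T + t*Real.sin T), Real.exp_pos (-(t*T))]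
  · exact integrable_bound ha0 ha1
  · filter_upwards [ae_restrict_mem measurableSet_Ioi] with t ht
    have ht0 : (0:ℝ) < t := ht
    have h2 : (0:ℝ) < 1 + t^2 := by positivity
    have hexp : Tendsto (fun T : ℝ => Real.exp (-(t*T)) * (Real.cos T + t*Real.sin T))
        atTop (nhds 0) := by
      have key : ∀ T : ℝ, ‖Real.exp (-(t*T)) * (Real.cos T + t*Real.sin T)‖
          ≤ Real.exp (-(t*T)) * (1+t) := by
        intro T
        rw [Real.norm_eq_abs, abs_mul, _root_.abs_of_pos (Real.exp_pos _)]
        gcongr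
        calc |Real.cos T + t*Real.sin T| ≤ |Real.cos T| + |t*Real.sin T| := abs_add_le _ _
          _ ≤ 1 + t := by
              rw [abs_mul, _root_.abs_of_nonneg ht0.le]
              have := Real.abs_cos_le_one T
              have h4 := Real.abs_sin_le_one T
              nlinarith
      have lim : Tendsto (fun T : ℝ => Real.exp (-(t*T)) * (1+t)) atTop (nhds 0) := by
        rw [show (0:ℝ) = 0 * (1+t) by ring]
        apply Tendsto.mul_const
        have : Tendsto (fun T : ℝ => t * T) atTop atTop :=
          tendsto_id.const_mul_atTop ht0
        have h6 := Real.tendsto_exp_atBot.comp (tendsto_neg_atTop_atBot.comp this)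
        simpa [Function.comp_def] using h6
      exact squeeze_zero_norm key lim
    apply Tendsto.const_mul
    have : Tendsto (fun T : ℝ => (1 - Real.exp (-(t*T)) * (Real.cos T + t*Real.sin T))/(1+t^2))
        atTop (nhds (1/(1+t^2))) := by
      have := (tendsto_const_nhds (x := (1:ℝ)) (f := atTop)).sub hexp
      simpa using this.div_const (1+t^2)
    exact (Complex.continuous_ofReal.continuousAt).tendsto.comp this

lemma sq_cpow {x : ℝ} (hx : 0 < x) (c : ℂ) : ((x:ℂ)^(2:ℕ))^c = (x:ℂ)^(2*c) := by
  rw [← Complex.cpow_natCast, ← Complex.cpow_mul]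
  · norm_num
  all_goals
    simp [Complex.log_im, Complex.arg_ofReal_of_nonneg hx.le]
  · linarith [Real.pi_pos]
  · exact Real.pi_nonneg

lemma gauss_cpow {u : ℝ} (hu : 0 < u) (ha0 : 0 < a.re) (ha1 : a.re < 1) :
    ∫ t in Ioi (0:ℝ), (t:ℂ)^(-a) * Complex.exp (-(u * (t:ℂ)^2))
      = (1/2 : ℂ) * ((1/(u:ℂ))^((1-a)/2) * Complex.Gamma ((1-a)/2)) := by
  set c : ℂ := (1-a)/2 with hc
  have key := MeasureTheory.integral_comp_rpow_Ioi
    (g := fun y : ℝ => (1/2 : ℂ) * ((y:ℂ)^(c-1) * Complex.exp (-(u*y)))) (p := 2) two_ne_zero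
  calc ∫ t in Ioi (0:ℝ), (t:ℂ)^(-a) * Complex.exp (-(u * (t:ℂ)^2))
      = ∫ x in Ioi (0:ℝ), (|(2:ℝ)| * x ^ ((2:ℝ) - 1)) •
          ((fun y : ℝ => (1/2:ℂ) * ((y:ℂ)^(c-1) * Complex.exp (-(↑u * ↑y)))) (x ^ (2:ℝ))) := by
        apply (setIntegral_congr_fun measurableSet_Ioi ?_).symm
        intro x hx
        have hx0 : (0:ℝ) < x := hx
        have hxne : (x:ℂ) ≠ 0 := by exact_mod_cast hx0.ne'
        dsimp only
        have e2 : ((x^(2:ℝ) : ℝ):ℂ) = (x:ℂ)^(2:ℕ) := by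
          rw [show (2:ℝ) = ((2:ℕ):ℝ) by norm_num, Real.rpow_natCast]
          push_cast
          ring
        have e3 : ((x:ℂ))^(-a-1) * (x:ℂ) = (x:ℂ)^(-a) := by
          nth_rewrite 2 [← Complex.cpow_one (x:ℂ)]
          rw [← Complex.cpow_add _ _ hxne]
          norm_num
        rw [e2, sq_cpow hx0, show (2*(c-1) : ℂ) = -a-1 by rw [hc]; ring,
          show |(2:ℝ)| * x ^ ((2:ℝ)-1) = 2*x by
            rw [show (2:ℝ)-1 = 1 by norm_num, Real.rpow_one]; norm_num,
          real_smul, ← e3]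
        push_cast
        ring
    _ = ∫ y in Ioi (0:ℝ), (1/2:ℂ) * ((y:ℂ)^(c-1) * Complex.exp (-(↑u * ↑y))) := key
    _ = (1/2 : ℂ) * ((1/(u:ℂ))^c * Complex.Gamma c) := by
        rw [MeasureTheory.integral_const_mul,
          Complex.integral_cpow_mul_exp_neg_mul_Ioi (by rw [hc]; simp [Complex.sub_re]; linarith) hu]

lemma int_exp_real {c : ℝ} (hc : 0 < c) :
    ∫ u in Ioi (0:ℝ), Real.exp (-(c*u)) = 1/c := by
  have h := integral_rpow_mul_exp_neg_mul_Ioi (a := 1) one_pos hc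
  rw [show (1:ℝ)-1 = 0 by norm_num] at h
  simpa [Real.rpow_zero, Real.rpow_one, Real.Gamma_one] using h

lemma fubini2 (ha0 : 0 < a.re) (ha1 : a.re < 1) :
    ∫ t in Ioi (0:ℝ), (t:ℂ)^(-a) * ((1/(1+t^2) : ℝ) : ℂ)
      = (1/2 : ℂ) * Complex.Gamma ((1-a)/2) * Complex.Gamma ((1+a)/2) := by
  set c : ℂ := (1-a)/2 with hc
  have hcre : 0 < c.re := by rw [hc]; simp [Complex.sub_re]; linarith
  set H : ℝ × ℝ → ℂ :=
    fun p => (p.1:ℂ)^(-a) * ((Real.exp (-((1+p.1^2)*p.2)) : ℝ) : ℂ) with hH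
  have hmeas2 : AEStronglyMeasurable H
      ((volume.restrict (Ioi 0)).prod (volume.restrict (Ioi 0))) := by
    have hcexp : Continuous (fun p : ℝ × ℝ => ((Real.exp (-((1+p.1^2)*p.2)) : ℝ) : ℂ)) :=
      Complex.continuous_ofReal.comp (by fun_prop)
    have hccpow : ContinuousOn (fun p : ℝ × ℝ => (p.1:ℂ)^(-a)) (Ioi 0 ×ˢ (univ : Set ℝ)) := by
      intro p hp
      apply ContinuousWithinAt.mono ?_ (subset_univ _)
      apply ContinuousAt.continuousWithinAt
      apply ContinuousAt.cpow (by fun_prop) continuousAt_const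
      left; simpa using hp.1
    have hcont : ContinuousOn H (Ioi 0 ×ˢ (univ : Set ℝ)) := hccpow.mul hcexp.continuousOn
    have h1 : AEStronglyMeasurable H
        ((volume.prod volume).restrict ((Ioi (0:ℝ)) ×ˢ (univ : Set ℝ))) :=
      hcont.aestronglyMeasurable (measurableSet_Ioi.prod MeasurableSet.univ)
    rw [Measure.prod_restrict]
    exact h1.mono_measure (Measure.restrict_mono (prod_mono subset_rfl (subset_univ _)) le_rfl)
  have hint2 : Integrable H
      ((volume.restrict (Ioi 0)).prod (volume.restrict (Ioi 0))) := by
    rw [integrable_prod_iff hmeas2]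
    constructor
    · filter_upwards [ae_restrict_mem measurableSet_Ioi] with t ht
      simp only [hH]
      have h2 : (0:ℝ) < 1 + t^2 := by positivity
      have hre : IntegrableOn (fun u : ℝ => Real.exp (-((1+t^2)*u))) (Ioi 0) :=
        (exp_neg_integrableOn_Ioi 0 h2).congr_fun (fun u _ => by simp only [neg_mul]) measurableSet_Ioi
      exact hre.ofReal.const_mul _
    · apply (integrable_bound2 ha0 ha1).congr
      filter_upwards [ae_restrict_mem measurableSet_Ioi] with t ht
      have ht0 : (0:ℝ) < t := ht
      have h2 : (0:ℝ) < 1 + t^2 := by positivity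
      have e1 : ∀ u : ℝ, ‖H (t, u)‖ = t^(-a.re) * Real.exp (-((1+t^2)*u)) := by
        intro u
        rw [hH]
        simp only [norm_mul, Complex.norm_cpow_eq_rpow_re_of_pos ht0,
          Complex.norm_real, Real.norm_eq_abs, _root_.abs_of_pos (Real.exp_pos _)]
        rw [show (-a).re = -a.re by simp]
      simp_rw [e1]
      rw [MeasureTheory.integral_const_mul, int_exp_real h2, div_eq_mul_one_div]
  calc ∫ t in Ioi (0:ℝ), (t:ℂ)^(-a) * ((1/(1+t^2) : ℝ) : ℂ)
      = ∫ t in Ioi (0:ℝ), ∫ u in Ioi (0:ℝ), H (t, u) := by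
        apply setIntegral_congr_fun measurableSet_Ioi
        intro t ht
        have h2 : (0:ℝ) < 1 + t^2 := by positivity
        simp only [hH]
        rw [MeasureTheory.integral_const_mul]
        congr 1
        exact (calc (∫ u in Ioi (0:ℝ), ((Real.exp (-((1+t^2)*u)) : ℝ):ℂ))
            = ((∫ u in Ioi (0:ℝ), Real.exp (-((1+t^2)*u)) : ℝ) : ℂ) := _root_.integral_ofReal
          _ = ((1/(1+t^2) : ℝ) : ℂ) := by rw [int_exp_real h2]).symm
    _ = ∫ u in Ioi (0:ℝ), ∫ t in Ioi (0:ℝ), H (t, u) := integral_integral_swap hint2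
    _ = ∫ u in Ioi (0:ℝ), Complex.exp (-(u:ℂ)) *
          ((1/2 : ℂ) * ((1/(u:ℂ))^c * Complex.Gamma c)) := by
        apply setIntegral_congr_fun measurableSet_Ioi
        intro u hu
        have hu0 : (0:ℝ) < u := hu
        dsimp only
        have e2 : ∀ t : ℝ, H (t, u)
            = Complex.exp (-(u:ℂ)) * ((t:ℂ)^(-a) * Complex.exp (-(u * (t:ℂ)^2))) := by
          intro t
          rw [hH]
          dsimp only
          rw [Complex.ofReal_exp, show ((-((1+t^2)*u) : ℝ) : ℂ)
            = (-(u:ℂ)) + (-(↑u * (t:ℂ)^2)) by push_cast; ring, Complex.exp_add]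
          ring
        simp_rw [e2]
        rw [MeasureTheory.integral_const_mul, gauss_cpow hu0 ha0 ha1]
    _ = (1/2 : ℂ) * Complex.Gamma ((1-a)/2) * Complex.Gamma ((1+a)/2) := by
        have e3 : ∀ u ∈ Ioi (0:ℝ), Complex.exp (-(u:ℂ)) *
              ((1/2 : ℂ) * ((1/(u:ℂ))^c * Complex.Gamma c))
            = ((1/2 : ℂ) * Complex.Gamma c) *
              ((u:ℂ)^((1-c)-1) * Complex.exp (-((1:ℝ) * u))) := by
          intro u hu
          have hu0 : (0:ℝ) < u := hu
          have hune : (u:ℂ) ≠ 0 := by exact_mod_cast hu0.ne'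
          have harg : (u:ℂ).arg ≠ Real.pi := by
            rw [Complex.arg_ofReal_of_nonneg hu0.le]
            exact (Real.pi_ne_zero).symm
          rw [show (1/(u:ℂ)) = (u:ℂ)⁻¹ from one_div _,
            Complex.inv_cpow _ _ harg, ← Complex.cpow_neg,
            show (1-c)-(1:ℂ) = -c by ring]
          rw [show ((-((1:ℝ) * u) : ℂ)) = -(u:ℂ) by push_cast; ring]
          ring
        rw [setIntegral_congr_fun measurableSet_Ioi e3, MeasureTheory.integral_const_mul,
          Complex.integral_cpow_mul_exp_neg_mul_Ioi
            (by rw [hc]; simp [Complex.sub_re, Complex.one_re]; linarith) one_pos]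
        rw [show ((1:ℂ) - c) = (1+a)/2 by rw [hc]; ring]
        norm_num [hc]

lemma gamma_one_sub_ne (ha1 : a.re < 1) : Complex.Gamma (1-a) ≠ 0 := by
  apply Complex.Gamma_ne_zero
  intro m h
  have := congrArg Complex.re h
  simp [Complex.sub_re, Complex.one_re] at this
  have hm : (0:ℝ) ≤ (m:ℝ) := Nat.cast_nonneg m
  linarith

lemma algebra_final (ha0 : 0 < a.re) (ha1 : a.re < 1) :
    (Complex.Gamma (1-a))⁻¹ *
        ((1/2 : ℂ) * Complex.Gamma ((1-a)/2) * Complex.Gamma ((1+a)/2))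
      = Complex.sin (↑Real.pi * a / 2) * Complex.Gamma a := by
  have hpi : ((Real.pi : ℝ) : ℂ) ≠ 0 := Complex.ofReal_ne_zero.mpr Real.pi_ne_zero
  have hG1 : Complex.Gamma (1-a) ≠ 0 := gamma_one_sub_ne ha1
  have hint : ∀ k : ℤ, a ≠ (k : ℂ) := by
    intro k h
    have := congrArg Complex.re h
    rw [Complex.intCast_re] at this
    have h0 : (0:ℝ) < (k:ℝ) := by rw [← this]; exact ha0
    have h1 : ((k:ℝ)) < 1 := by rw [← this]; exact ha1
    have hk0 : 0 < k := by exact_mod_cast h0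
    have hk1 : k < 1 := by exact_mod_cast h1
    omega
  have hcos : Complex.cos (↑Real.pi * a / 2) ≠ 0 := by
    intro h
    rw [Complex.cos_eq_zero_iff] at h
    obtain ⟨k, hk⟩ := h
    apply hint (2*k+1)
    have : (↑Real.pi : ℂ) * a = (2*(k:ℂ)+1) * ↑Real.pi := by
      field_simp at hk
      linear_combination (↑Real.pi:ℂ) * hk
    have h2 : a = 2*(k:ℂ)+1 := by
      apply mul_left_cancel₀ hpi
      rw [this]; ring
    rw [h2]; push_cast; ring
  have hsin : Complex.sin (↑Real.pi * a / 2) ≠ 0 := by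
    intro h
    rw [Complex.sin_eq_zero_iff] at h
    obtain ⟨k, hk⟩ := h
    apply hint (2*k)
    have : (↑Real.pi : ℂ) * a = 2*(k:ℂ) * ↑Real.pi := by
      field_simp at hk
      linear_combination (↑Real.pi:ℂ) * hk
    have h2 : a = 2*(k:ℂ) := by
      apply mul_left_cancel₀ hpi
      rw [this]; ring
    rw [h2]; push_cast; ring
  have R2 : Complex.Gamma ((1-a)/2) * Complex.Gamma ((1+a)/2)
      = ↑Real.pi / Complex.cos (↑Real.pi * a / 2) := by
    have h := Complex.Gamma_mul_Gamma_one_sub ((1-a)/2)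
    rw [show (1:ℂ) - (1-a)/2 = (1+a)/2 by ring] at h
    rw [h, show (↑Real.pi : ℂ) * ((1-a)/2) = ↑Real.pi/2 - ↑Real.pi*a/2 by ring,
      Complex.sin_pi_div_two_sub]
  have R1 := Complex.Gamma_mul_Gamma_one_sub a
  have hs2 : Complex.sin (↑Real.pi * a)
      = 2 * Complex.sin (↑Real.pi * a / 2) * Complex.cos (↑Real.pi * a / 2) := by
    have h := Complex.sin_two_mul ((↑Real.pi : ℂ) * a / 2)
    rw [show 2 * ((↑Real.pi:ℂ) * a / 2) = ↑Real.pi * a by ring] at h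
    exact h
  rw [mul_assoc ((1/2):ℂ), R2, inv_mul_eq_iff_eq_mul₀ hG1]
  have e : Complex.Gamma (1-a) * (Complex.sin (↑Real.pi * a / 2) * Complex.Gamma a)
      = Complex.sin (↑Real.pi * a / 2) * (Complex.Gamma a * Complex.Gamma (1-a)) := by ring
  rw [e, R1, hs2]
  field_simp

end

/-- For `-1 < Re s < 0`, `∫_0^∞ sin(x) x^{-s-1} dx = -sin(πs/2) Γ(-s)`
as an improper Riemann integral. -/
theorem integral_sin_mul_cpow (s : ℂ) (h1 : -1 < s.re) (h2 : s.re < 0) :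
    Tendsto (fun T : ℝ =>
        ∫ x in (0 : ℝ)..T, ((Real.sin x : ℝ) : ℂ) * (x : ℂ) ^ (-s - 1))
      atTop
      (nhds (-Complex.sin ((Real.pi : ℂ) * s / 2) * Complex.Gamma (-s))) := by
  set a : ℂ := -s with ha
  have ha0 : 0 < a.re := by rw [ha, Complex.neg_re]; linarith
  have ha1 : a.re < 1 := by rw [ha, Complex.neg_re]; linarith
  have hG1 : Complex.Gamma (1-a) ≠ 0 := gamma_one_sub_ne ha1
  have hval : (Complex.Gamma (1-a))⁻¹ *
        (∫ t in Ioi (0:ℝ), (t:ℂ)^(-a) * ((1/(1+t^2) : ℝ) : ℂ))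
      = -Complex.sin ((Real.pi : ℂ) * s / 2) * Complex.Gamma (-s) := by
    rw [fubini2 ha0 ha1, algebra_final ha0 ha1, ha,
      show ((Real.pi : ℂ) * (-s) / 2) = -((Real.pi : ℂ) * s / 2) by ring, Complex.sin_neg]
  have hlim := (tendsto_int ha0 ha1).const_mul ((Complex.Gamma (1-a))⁻¹)
  rw [hval] at hlim
  apply hlim.congr'
  filter_upwards [eventually_gt_atTop (0:ℝ)] with T hT
  rw [← fubini1 ha0 ha1 hT, ← mul_assoc, inv_mul_cancel₀ hG1, one_mul]
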